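/- If the DGGI of X̂ = X + εX₀ exists and X̂ ≤ Ŷ in the D-group order, then in a basis P in which X = P·diag(C,0)·P⁻¹ with C invertible and X₀ = P·[[X₁,X₂],[X₃,0]]·P⁻¹, the matrix Ŷ has the form Ŷ = P·diag(C,B)·P⁻¹ + ε P·[[X₁, X₂ − C R₂ B],[X₃ − B R₃ C, Y₄]]·P⁻¹ for some arbitrary Y₄, where R = P·[[R₁,R₂],[R₃,R₄]]·P⁻¹ is the dual part of X̂^#. -/
import Mathlib


open Matrix Finset

noncomputable section

/-- The dual matrix `A + εB` as a matrix over the dual numbers `ℝ[ε]/(ε²)`. -/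
def dmat {m : Type*} (A B : Matrix m m ℝ) : Matrix m m (DualNumber ℝ) :=
  Matrix.of fun i j => TrivSqZeroExt.inl (A i j) + TrivSqZeroExt.inr (B i j)

/-- `x` is a Drazin inverse of `a` with index parameter `k`
(for `k = 1` this is the group inverse). -/
def IsDrazin {R : Type*} [Monoid R] (k : ℕ) (a x : R) : Prop :=
  a ^ k * x * a = a ^ k ∧ x * a * x = x ∧ a * x = x * a

/-- `A` has index `k`: `k` is the smallest nonnegative integer with
`rank (A^k) = rank (A^(k+1))`. -/
def hasIndex {m : Type*} [Fintype m] [DecidableEq m] (A : Matrix m m ℝ) (k : ℕ) : Prop :=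
  (A ^ (k + 1)).rank = (A ^ k).rank ∧ ∀ j < k, (A ^ (j + 1)).rank ≠ (A ^ j).rank

/-- `D = A^{k-1} B + A^{k-2} B A + ⋯ + B A^{k-1}`. -/
def dsum {m : Type*} [Fintype m] [DecidableEq m] (A B : Matrix m m ℝ) (k : ℕ) :
    Matrix m m ℝ :=
  ∑ i ∈ Finset.range k, A ^ i * B * A ^ (k - 1 - i)

lemma dmat_mul {m : Type*} [Fintype m] (A B C D : Matrix m m ℝ) :
    dmat A B * dmat C D = dmat (A*C) (A*D + B*C) := by
  ext i j <;>
  simp [dmat, Matrix.mul_apply, TrivSqZeroExt.fst_sum, TrivSqZeroExt.snd_sum,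
    TrivSqZeroExt.fst_mul, TrivSqZeroExt.snd_mul, mul_add, add_mul,
    Finset.sum_add_distrib, mul_comm, add_comm]

lemma dmat_inj {m : Type*} {A B C D : Matrix m m ℝ} (h : dmat A B = dmat C D) :
    A = C ∧ B = D := by
  constructor <;> ext i j
  · have := congrFun (congrFun h i) j
    simpa [dmat, TrivSqZeroExt.ext_iff] using (congrArg TrivSqZeroExt.fst this)
  · have := congrFun (congrFun h i) j
    simpa [dmat, TrivSqZeroExt.ext_iff] using (congrArg TrivSqZeroExt.snd this)

theorem dgroup_order_representation {r s : ℕ}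
    (P : Matrix (Fin r ⊕ Fin s) (Fin r ⊕ Fin s) ℝ) (hP : IsUnit P)
    (C : Matrix (Fin r) (Fin r) ℝ) (hC : IsUnit C)
    (X1 : Matrix (Fin r) (Fin r) ℝ) (X2 : Matrix (Fin r) (Fin s) ℝ)
    (X3 : Matrix (Fin s) (Fin r) ℝ)
    (R1 : Matrix (Fin r) (Fin r) ℝ) (R2 : Matrix (Fin r) (Fin s) ℝ)
    (R3 : Matrix (Fin s) (Fin r) ℝ) (R4 : Matrix (Fin s) (Fin s) ℝ)
    (X X0 Xg R Y Y0 : Matrix (Fin r ⊕ Fin s) (Fin r ⊕ Fin s) ℝ)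
    (hX : X = P * Matrix.fromBlocks C 0 0 0 * P⁻¹)
    (hX0 : X0 = P * Matrix.fromBlocks X1 X2 X3 0 * P⁻¹)
    (hXg : Xg = P * Matrix.fromBlocks C⁻¹ 0 0 0 * P⁻¹)
    (hRdef : R = P * Matrix.fromBlocks R1 R2 R3 R4 * P⁻¹)
    (hhash : IsDrazin 1 (dmat X X0) (dmat Xg R))
    (horder : dmat Xg R * dmat X X0 = dmat Xg R * dmat Y Y0 ∧
      dmat X X0 * dmat Xg R = dmat Y Y0 * dmat Xg R) :
    ∃ (Bm : Matrix (Fin s) (Fin s) ℝ) (Y4 : Matrix (Fin s) (Fin s) ℝ),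
      Y = P * Matrix.fromBlocks C 0 0 Bm * P⁻¹ ∧
      Y0 = P * Matrix.fromBlocks X1 (X2 - C * R2 * Bm) (X3 - Bm * R3 * C) Y4 * P⁻¹ := by
  have hPd : IsUnit P.det := (Matrix.isUnit_iff_isUnit_det P).mp hP
  have hCd : IsUnit C.det := (Matrix.isUnit_iff_isUnit_det C).mp hC
  have hPQ : P * P⁻¹ = 1 := Matrix.mul_nonsing_inv P hPd
  have hQP : P⁻¹ * P = 1 := Matrix.nonsing_inv_mul P hPd
  have hCC : C⁻¹ * C = 1 := Matrix.nonsing_inv_mul C hCd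
  have hCC' : C * C⁻¹ = 1 := Matrix.mul_nonsing_inv C hCd
  have key : ∀ A : Matrix (Fin r ⊕ Fin s) (Fin r ⊕ Fin s) ℝ,
      P⁻¹ * (P * A * P⁻¹) * P = A := by
    intro A
    calc P⁻¹ * (P * A * P⁻¹) * P = (P⁻¹ * P) * A * (P⁻¹ * P) := by noncomm_ring
      _ = A := by rw [hQP]; simp
  have conj_mul : ∀ A B : Matrix (Fin r ⊕ Fin s) (Fin r ⊕ Fin s) ℝ,
      (P * A * P⁻¹) * (P * B * P⁻¹) = P * (A * B) * P⁻¹ := by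
    intro A B
    calc (P * A * P⁻¹) * (P * B * P⁻¹) = P * (A * (P⁻¹ * P) * B) * P⁻¹ := by
          noncomm_ring
      _ = P * (A * B) * P⁻¹ := by rw [hQP]; noncomm_ring
  have conj_add : ∀ A B : Matrix (Fin r ⊕ Fin s) (Fin r ⊕ Fin s) ℝ,
      (P * A * P⁻¹) + (P * B * P⁻¹) = P * (A + B) * P⁻¹ := by
    intro A B; noncomm_ring
  have conj_inj : ∀ A B : Matrix (Fin r ⊕ Fin s) (Fin r ⊕ Fin s) ℝ,
      P * A * P⁻¹ = P * B * P⁻¹ → A = B := by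
    intro A B h
    rw [← key A, ← key B, h]
  set Y' := P⁻¹ * Y * P with hY'
  set Y0' := P⁻¹ * Y0 * P with hY0'
  have hY : Y = P * Y' * P⁻¹ := by
    rw [hY']
    calc Y = (P * P⁻¹) * Y * (P * P⁻¹) := by rw [hPQ]; simp
      _ = P * (P⁻¹ * Y * P) * P⁻¹ := by noncomm_ring
  have hY0 : Y0 = P * Y0' * P⁻¹ := by
    rw [hY0']
    calc Y0 = (P * P⁻¹) * Y0 * (P * P⁻¹) := by rw [hPQ]; simp
      _ = P * (P⁻¹ * Y0 * P) * P⁻¹ := by noncomm_ring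
  obtain ⟨h1, h2⟩ := horder
  rw [dmat_mul, dmat_mul] at h1 h2
  obtain ⟨e1, e2⟩ := dmat_inj h1
  obtain ⟨e3, e4⟩ := dmat_inj h2
  rw [hX, hXg, hY, conj_mul, conj_mul] at e1 e3
  rw [hX, hXg, hX0, hRdef, hY, hY0, conj_mul, conj_mul, conj_mul, conj_mul,
    conj_add, conj_add] at e2 e4
  have E1 := conj_inj _ _ e1
  have E3 := conj_inj _ _ e3
  have E2 := conj_inj _ _ e2
  have E4 := conj_inj _ _ e4
  clear e1 e2 e3 e4 h1 h2
  obtain ⟨Y1, Y2, Y3, Y4, hYb⟩ : ∃ A B Cc D, Y' = Matrix.fromBlocks A B Cc D :=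
    ⟨_, _, _, _, (Matrix.fromBlocks_toBlocks Y').symm⟩
  obtain ⟨W1, W2, W3, W4, hWb⟩ : ∃ A B Cc D, Y0' = Matrix.fromBlocks A B Cc D :=
    ⟨_, _, _, _, (Matrix.fromBlocks_toBlocks Y0').symm⟩
  rw [hYb] at E1 E3
  simp only [Matrix.fromBlocks_multiply, Matrix.mul_zero, Matrix.zero_mul, add_zero,
    zero_add, hCC, hCC', Matrix.fromBlocks_inj] at E1 E3
  obtain ⟨f11, f12, -, -⟩ := E1
  obtain ⟨-, -, f31, -⟩ := E3
  have hY1 : Y1 = C := by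
    calc Y1 = C * (C⁻¹ * Y1) := by rw [← Matrix.mul_assoc, hCC', Matrix.one_mul]
      _ = C * (1 : Matrix (Fin r) (Fin r) ℝ) := by rw [← f11]
      _ = C := Matrix.mul_one C
  have hY2 : Y2 = 0 := by
    calc Y2 = C * (C⁻¹ * Y2) := by rw [← Matrix.mul_assoc, hCC', Matrix.one_mul]
      _ = C * (0 : Matrix (Fin r) (Fin s) ℝ) := by rw [← f12]
      _ = 0 := Matrix.mul_zero C
  have hY3 : Y3 = 0 := by
    calc Y3 = (Y3 * C⁻¹) * C := by rw [Matrix.mul_assoc, hCC, Matrix.mul_one]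
      _ = (0 : Matrix (Fin s) (Fin r) ℝ) * C := by rw [← f31]
      _ = 0 := Matrix.zero_mul C
  rw [hYb, hWb, hY1, hY2, hY3] at E2 E4
  simp only [Matrix.fromBlocks_multiply, Matrix.fromBlocks_add, Matrix.mul_zero,
    Matrix.zero_mul, add_zero, zero_add, Matrix.fromBlocks_inj] at E2 E4
  obtain ⟨g11, g12, -, -⟩ := E2
  obtain ⟨-, -, g31, -⟩ := E4
  refine ⟨Y4, W4, ?_, ?_⟩
  · rw [hY, hYb, hY1, hY2, hY3]
  · rw [hY0, hWb]
    have hW1 : W1 = X1 := by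
      have h := add_right_cancel g11
      calc W1 = C * (C⁻¹ * W1) := by rw [← Matrix.mul_assoc, hCC', Matrix.one_mul]
        _ = C * (C⁻¹ * X1) := by rw [← h]
        _ = X1 := by rw [← Matrix.mul_assoc, hCC', Matrix.one_mul]
    have hW2 : W2 = X2 - C * R2 * Y4 := by
      have h := congrArg (fun M => C * M) g12
      simp only [Matrix.mul_add, ← Matrix.mul_assoc, hCC', Matrix.one_mul] at h
      exact (eq_sub_of_add_eq h.symm)
    have hW3 : W3 = X3 - Y4 * R3 * C := by
      have h := congrArg (fun M => M * C) g31
      simp only [Matrix.add_mul, Matrix.mul_assoc, hCC, Matrix.mul_one] at h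
      rw [Matrix.mul_assoc Y4 R3 C]
      exact eq_sub_of_add_eq' h.symm
    rw [hW1, hW2, hW3]
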